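/- Let X be an ordered vector space, (a_n) a sequence in X converging to a with respect to the sequential order topology τ_os(X), and (λ_n) a real sequence converging to λ. If the sequence ((1/n)·a) order converges to 0 in X, then (λ_n · a_n) converges to λ·a with respect to τ_os(X). -/

import Mathlib

/-- A net `x`, indexed by a set with relation `r`, *order converges* to `l` in a poset if it is
squeezed between an increasing net with supremum `l` and a decreasing net with infimum `l`. -/
def OrderConvNet {ι P : Type*} (r : ι → ι → Prop) [Preorder P] (x : ι → P) (l : P) : Prop :=
  ∃ y z : ι → P,
    (∀ i j, r i j → y i ≤ y j) ∧ (∀ i j, r i j → z j ≤ z i) ∧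
    (∀ i, y i ≤ x i ∧ x i ≤ z i) ∧
    IsLUB (Set.range y) l ∧ IsGLB (Set.range z) l

/-- Order convergence of a sequence in a poset. -/
def SeqOrderConv {P : Type*} [Preorder P] (x : ℕ → P) (l : P) : Prop :=
  OrderConvNet (· ≤ · : ℕ → ℕ → Prop) x l

/-- The sequential order topology `τ_os(P)`: the finest topology on `P` preserving order
convergence of sequences. -/
def seqOrderTop (P : Type*) [Preorder P] : TopologicalSpace P :=
  sInf {t : TopologicalSpace P | ∀ (x : ℕ → P) (l : P), SeqOrderConv x l →
    Filter.Tendsto x Filter.atTop (@nhds P t l)}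

open Filter Set


section OVS
variable {X : Type*} [AddCommGroup X] [PartialOrder X] [IsOrderedAddMonoid X]

def ANull (B : ℕ → X) : Prop :=
  Antitone B ∧ (∀ i, (0:X) ≤ B i) ∧ ∀ b : X, (∀ i, b ≤ B i) → b ≤ 0

def SeqOpen (U : Set X) : Prop :=
  ∀ (x : ℕ → X) (p : X), SeqOrderConv x p → p ∈ U → ∀ᶠ j in Filter.atTop, x j ∈ U

lemma anull_zero : ANull (fun _ : ℕ => (0:X)) :=
  ⟨fun _ _ _ => le_rfl, fun _ => le_rfl, fun b hb => hb 0⟩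

lemma anull_sum_le {B C : ℕ → X} (hB : ANull B) (hC : ANull C) :
    ∀ b : X, (∀ i, b ≤ B i + C i) → b ≤ 0 := by
  intro b hb
  have h1 : ∀ i, b - C i ≤ 0 := by
    intro i
    refine hB.2.2 _ (fun j => ?_)
    rcases le_total i j with h | h
    · exact sub_le_iff_le_add.2 ((hb j).trans (add_le_add_right (hC.1 h) _))
    · exact (sub_le_iff_le_add.2 (hb i)).trans (hB.1 h)
  exact hC.2.2 b (fun i => sub_nonpos.mp (h1 i))

lemma ANull.add {B C : ℕ → X} (hB : ANull B) (hC : ANull C) :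
    ANull (fun i => B i + C i) :=
  ⟨fun i j h => add_le_add (hB.1 h) (hC.1 h),
   fun i => add_nonneg (hB.2.1 i) (hC.2.1 i),
   anull_sum_le hB hC⟩

lemma ANull.comp {B : ℕ → X} (hB : ANull B) {f : ℕ → ℕ} (hf : Monotone f)
    (hf2 : ∀ m, ∃ i, m ≤ f i) : ANull (B ∘ f) :=
  ⟨fun i j h => hB.1 (hf h), fun i => hB.2.1 _,
   fun b hb => hB.2.2 b (fun m => by
     obtain ⟨i, hi⟩ := hf2 m
     exact (hb i).trans (hB.1 hi))⟩

lemma ANull.subseq {B : ℕ → X} (hB : ANull B) {f : ℕ → ℕ} (hf : StrictMono f) :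
    ANull (B ∘ f) :=
  hB.comp hf.monotone (fun m => ⟨m, hf.le_apply⟩)

/-- construct order convergence from symmetric antitone null bounds -/
lemma oconv_of_bounds {x : ℕ → X} {p : X} {B : ℕ → X} (hB : ANull B)
    (h : ∀ i, p - B i ≤ x i ∧ x i ≤ p + B i) : SeqOrderConv x p := by
  refine ⟨fun i => p - B i, fun i => p + B i,
    fun i j hij => sub_le_sub_left (hB.1 hij) _,
    fun i j hij => add_le_add_right (hB.1 hij) _,
    h, ?_, ?_⟩
  · constructor
    · rintro _ ⟨i, rfl⟩
      exact sub_le_self _ (hB.2.1 i)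
    · intro b hb
      have h2 : ∀ i, p - b ≤ B i := by
        intro i
        have := hb ⟨i, rfl⟩
        exact sub_le_comm.mp this
      exact sub_nonpos.mp (hB.2.2 _ h2)
  · constructor
    · rintro _ ⟨i, rfl⟩
      exact le_add_of_nonneg_right (hB.2.1 i)
    · intro b hb
      have h2 : ∀ i, b - p ≤ B i := by
        intro i
        have := hb ⟨i, rfl⟩
        exact sub_le_iff_le_add'.mpr this
      exact sub_nonpos.mp (hB.2.2 _ h2)

/-- extract symmetric antitone null bounds from order convergence -/
lemma bounds_of_oconv {x : ℕ → X} {p : X} (h : SeqOrderConv x p) :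
    ∃ B : ℕ → X, ANull B ∧ ∀ i, p - B i ≤ x i ∧ x i ≤ p + B i := by
  obtain ⟨y, z, hy, hz, hsq, hlub, hglb⟩ := h
  have hyp : ∀ i, y i ≤ p := fun i => hlub.1 ⟨i, rfl⟩
  have hpz : ∀ i, p ≤ z i := fun i => hglb.1 ⟨i, rfl⟩
  refine ⟨fun i => (p - y i) + (z i - p), ⟨?_, ?_, ?_⟩, ?_⟩
  · intro i j hij
    exact add_le_add (sub_le_sub_left (hy i j hij) _) (sub_le_sub_right (hz i j hij) _)
  · intro i
    exact add_nonneg (sub_nonneg.2 (hyp i)) (sub_nonneg.2 (hpz i))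
  · refine anull_sum_le ⟨?_, ?_, ?_⟩ ⟨?_, ?_, ?_⟩
    · intro i j hij; exact sub_le_sub_left (hy i j hij) _
    · intro i; exact sub_nonneg.2 (hyp i)
    · intro b hb
      have : ∀ i, y i ≤ p - b := fun i => le_sub_comm.mp (hb i)
      have hub : p ≤ p - b := hlub.2 (by rintro _ ⟨i, rfl⟩; exact this i)
      exact (le_sub_self_iff p).mp hub
    · intro i j hij; exact sub_le_sub_right (hz i j hij) _
    · intro i; exact sub_nonneg.2 (hpz i)
    · intro b hb
      have : ∀ i, p + b ≤ z i := fun i => le_sub_iff_add_le'.mp (hb i)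
      have hlb : p + b ≤ p := hglb.2 (by rintro _ ⟨i, rfl⟩; exact this i)
      exact (add_le_iff_nonpos_right p).mp hlb
  · intro i
    constructor
    · have : p - ((p - y i) + (z i - p)) ≤ y i := by
        have h0 : (0:X) ≤ z i - p := sub_nonneg.2 (hpz i)
        have : p - ((p - y i) + (z i - p)) = y i - (z i - p) := by abel
        rw [this]
        exact sub_le_self _ h0
      exact this.trans (hsq i).1
    · have : z i ≤ p + ((p - y i) + (z i - p)) := by
        have h0 : (0:X) ≤ p - y i := sub_nonneg.2 (hyp i)
        have he : p + ((p - y i) + (z i - p)) = z i + (p - y i) := by abel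
        rw [he]
        exact le_add_of_nonneg_right h0
      exact (hsq i).2.trans this

lemma oconv_const (p : X) : SeqOrderConv (fun _ => p) p :=
  oconv_of_bounds anull_zero (fun _ => by simp)

lemma oconv_subseq {x : ℕ → X} {p : X} (h : SeqOrderConv x p) {f : ℕ → ℕ}
    (hf : StrictMono f) : SeqOrderConv (x ∘ f) p := by
  obtain ⟨B, hB, hb⟩ := bounds_of_oconv h
  exact oconv_of_bounds (hB.subseq hf) (fun i => hb (f i))

lemma oconv_unique {x : ℕ → X} {p q : X} (hp : SeqOrderConv x p) (hq : SeqOrderConv x q) :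
    p = q := by
  obtain ⟨B, hB, hbB⟩ := bounds_of_oconv hp
  obtain ⟨C, hC, hbC⟩ := bounds_of_oconv hq
  have h1 : p - q ≤ 0 := by
    refine anull_sum_le hB hC _ (fun i => ?_)
    have := ((hbB i).1).trans (hbC i).2
    have : p - q ≤ B i + C i := by
      have := sub_le_iff_le_add.2 this
      -- p - B i ≤ q + C i
      calc p - q ≤ (q + C i + B i) - q := by
            refine sub_le_sub_right ?_ q
            have h2 : p ≤ q + C i + B i := by
              have h3 : p - B i ≤ q + C i := ((hbB i).1).trans (hbC i).2
              exact sub_le_iff_le_add.mp h3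
            exact h2
        _ = B i + C i := by abel
    exact this
  have h2 : q - p ≤ 0 := by
    refine anull_sum_le hC hB _ (fun i => ?_)
    have h3 : q - C i ≤ p + B i := ((hbC i).1).trans (hbB i).2
    calc q - p ≤ (p + B i + C i) - p := by
          refine sub_le_sub_right (sub_le_iff_le_add.mp h3) p
      _ = C i + B i := by abel
  have := sub_nonpos.mp h1
  exact le_antisymm this (sub_nonpos.mp h2)

end OVS

section SMul
variable {X : Type*} [AddCommGroup X] [PartialOrder X] [IsOrderedAddMonoid X] [Module ℝ X]
    [PosSMulStrictMono ℝ X] [PosSMulReflectLT ℝ X]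

lemma smul_in_pos {s c : ℝ} {u P Q : X} (hs0 : 0 ≤ s) (hsc : s ≤ c)
    (hPu : P ≤ u) (huQ : u ≤ Q) (hP0 : P ≤ 0) (hQ0 : 0 ≤ Q) :
    -(c • (Q - P)) ≤ s • u ∧ s • u ≤ c • (Q - P) := by
  have hc0 : (0:ℝ) ≤ c := hs0.trans hsc
  constructor
  · have h1 : s • P ≤ s • u := smul_le_smul_of_nonneg_left hPu hs0
    have h2 : c • P ≤ s • P := by
      have : (0:X) ≤ (c - s) • (-P) := smul_nonneg (by linarith) (neg_nonneg.2 hP0)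
      have he : (c - s) • (-P) = s • P - c • P := by
        rw [smul_neg, sub_smul]; abel
      rw [he] at this
      exact sub_nonneg.mp this
    have h3 : -(c • (Q - P)) ≤ c • P := by
      have h0 : (0:X) ≤ c • Q := smul_nonneg hc0 hQ0
      have he : c • P - (-(c • (Q - P))) = c • Q := by
        rw [smul_sub]; abel
      have h5 : (0:X) ≤ c • P - (-(c • (Q - P))) := he ▸ h0
      exact sub_nonneg.mp h5
    exact h3.trans (h2.trans h1)
  · have h1 : s • u ≤ s • Q := smul_le_smul_of_nonneg_left huQ hs0
    have h2 : s • Q ≤ c • Q := by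
      have : (0:X) ≤ (c - s) • Q := smul_nonneg (by linarith) hQ0
      rw [sub_smul] at this
      exact sub_nonneg.mp this
    have h3 : c • Q ≤ c • (Q - P) := by
      have : (0:X) ≤ c • (-P) := smul_nonneg hc0 (neg_nonneg.2 hP0)
      have he : c • (Q - P) - c • Q = c • (-P) := by
        rw [smul_sub, smul_neg]; abel
      have h4 := this
      rw [← he] at h4
      exact sub_nonneg.mp h4
    exact h1.trans (h2.trans h3)

lemma smul_in {s c : ℝ} {u P Q : X} (hsc : |s| ≤ c)
    (hPu : P ≤ u) (huQ : u ≤ Q) (hP0 : P ≤ 0) (hQ0 : 0 ≤ Q) :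
    -(c • (Q - P)) ≤ s • u ∧ s • u ≤ c • (Q - P) := by
  rcases le_total 0 s with hs | hs
  · exact smul_in_pos hs ((le_abs_self s).trans hsc) hPu huQ hP0 hQ0
  · have h := smul_in_pos (s := -s) (u := -u) (P := -Q) (Q := -P) (by linarith)
      ((neg_le_abs s).trans hsc)
      (neg_le_neg huQ) (neg_le_neg hPu) (neg_nonpos.2 hQ0) (neg_nonneg.2 hP0)
    have he : (-P) - (-Q) = Q - P := by abel
    rw [he] at h
    have he2 : (-s) • (-u) = s • u := by rw [smul_neg, neg_smul]; simp
    rw [he2] at h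
    exact h

lemma ANull.smul {B : ℕ → X} (hB : ANull B) {c : ℝ} (hc : 0 < c) :
    ANull (fun i => c • B i) := by
  refine ⟨fun i j h => smul_le_smul_of_nonneg_left (hB.1 h) hc.le,
    fun i => smul_nonneg hc.le (hB.2.1 i), fun b hb => ?_⟩
  have h1 : ∀ i, c⁻¹ • b ≤ B i := by
    intro i
    have := smul_le_smul_of_nonneg_left (hb i) (inv_nonneg.2 hc.le)
    rwa [inv_smul_smul₀ hc.ne'] at this
  have h2 : c⁻¹ • b ≤ 0 := hB.2.2 _ h1
  have := smul_le_smul_of_nonneg_left h2 hc.le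
  rwa [smul_inv_smul₀ hc.ne', smul_zero] at this

end SMul

/-- control of a convergent real sequence by a monotone unbounded rate function -/
lemma scalar_control {lam : ℕ → ℝ} {l : ℝ} (hlam : Filter.Tendsto lam Filter.atTop (nhds l)) :
    ∃ (c : ℝ) (mf : ℕ → ℕ), 1 ≤ c ∧ (∀ n, |lam n| ≤ c) ∧ Monotone mf ∧
      (∀ M, ∃ N, ∀ n, N ≤ n → M ≤ mf n) ∧ ∀ n, |lam n - l| * (mf n + 1) ≤ c := by
  classical
  have h := Metric.tendsto_atTop.mp hlam
  have hN : ∀ m : ℕ, ∃ N, ∀ n ≥ N, |lam n - l| < 1 / (m + 1) := by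
    intro m
    obtain ⟨N, hNs⟩ := h (1 / (m + 1)) (by positivity)
    exact ⟨N, fun n hn => by simpa [Real.dist_eq] using hNs n hn⟩
  choose N hNspec using hN
  set N' : ℕ → ℕ := fun m => Nat.rec (N 0) (fun m ih => max (N (m + 1)) (ih + 1)) m with hN'
  have hN'ge : ∀ m, N m ≤ N' m := by
    intro m; cases m with
    | zero => exact le_rfl
    | succ k => exact le_max_left _ _
  have hN'spec : ∀ m n, N' m ≤ n → |lam n - l| < 1 / (m + 1) :=
    fun m n hn => hNspec m n ((hN'ge m).trans hn)
  -- bound on |lam n - l|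
  have hb : BddAbove (Set.range fun n => |lam n - l|) := by
    have ht : Filter.Tendsto (fun n => |lam n - l|) Filter.atTop (nhds |(0:ℝ)|) :=
      (Filter.Tendsto.abs (by simpa using hlam.sub_const l))
    exact ht.bddAbove_range
  obtain ⟨R, hR⟩ := hb
  have hRb : ∀ n, |lam n - l| ≤ R := fun n => hR ⟨n, rfl⟩
  set c : ℝ := max (R + |l| + 1) 1 with hc
  have hc1 : 1 ≤ c := le_max_right _ _
  have hcR : R + 1 ≤ c := by
    have : R + |l| + 1 ≤ c := le_max_left _ _
    have h0 : (0:ℝ) ≤ |l| := abs_nonneg l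
    linarith
  set mf : ℕ → ℕ := fun n => Nat.findGreatest (fun m => N' m ≤ n) n with hmf
  refine ⟨c, mf, hc1, ?_, ?_, ?_, ?_⟩
  · intro n
    have : |lam n| ≤ |lam n - l| + |l| := by
      calc |lam n| = |(lam n - l) + l| := by ring_nf
        _ ≤ |lam n - l| + |l| := abs_add_le _ _
    have := this.trans (add_le_add_left (hRb n) _)
    have h2 : R + |l| + 1 ≤ c := le_max_left _ _
    linarith
  · intro n n' hnn'
    by_cases h0 : mf n = 0
    · simp [h0]
    · have hspec : N' (mf n) ≤ n := by
        have := (Nat.findGreatest_eq_iff.mp (rfl : Nat.findGreatest (fun m => N' m ≤ n) n = mf n))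
        exact this.2.1 h0
      exact Nat.le_findGreatest ((Nat.findGreatest_le n).trans hnn') (hspec.trans hnn')
  · intro M
    refine ⟨max (N' M) M, fun n hn => ?_⟩
    exact Nat.le_findGreatest (le_trans (le_max_right _ _) hn) (le_trans (le_max_left _ _) hn)
  · intro n
    by_cases h0 : mf n = 0
    · rw [h0]
      have := hRb n
      push_cast
      have h2 : |lam n - l| * (0 + 1) = |lam n - l| := by ring
      rw [h2]
      linarith
    · have hspec : N' (mf n) ≤ n := by
        have := (Nat.findGreatest_eq_iff.mp (rfl : Nat.findGreatest (fun m => N' m ≤ n) n = mf n))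
        exact this.2.1 h0
      have hlt := hN'spec (mf n) n hspec
      have hpos : (0:ℝ) < (mf n : ℝ) + 1 := by positivity
      have : |lam n - l| * (mf n + 1) < (1 / (mf n + 1)) * (mf n + 1) :=
        mul_lt_mul_of_pos_right hlt hpos
      rw [one_div_mul_cancel hpos.ne'] at this
      exact this.le.trans hc1

section Reach
variable {X : Type*} [AddCommGroup X] [PartialOrder X] [IsOrderedAddMonoid X]

/-- points reachable from `a` by repeatedly adding order intervals avoiding `E` -/
inductive Reach (a : X) (E : Set X) : X → Prop where
  | base : Reach a E a
  | step (w u : X) (B : ℕ → X) (m : ℕ) (hw : Reach a E w) (hB : ANull B)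
      (hclean : ∀ v, w - B m ≤ v → v ≤ w + B m → v ∉ E)
      (h1 : w - B m ≤ u) (h2 : u ≤ w + B m) : Reach a E u

lemma reach_not_mem {a : X} {E : Set X} (haE : a ∉ E) :
    ∀ x, Reach a E x → x ∉ E := by
  intro x h
  induction h with
  | base => exact haE
  | step w u B m hw hB hclean h1 h2 ih => exact hclean u h1 h2

/-- `E` is closed under order limits of sequences from `E` -/
def Closedish (E : Set X) : Prop :=
  ∀ (u : ℕ → X) (p : X), (∀ j, u j ∈ E) → SeqOrderConv u p → p ∈ E

lemma reach_seqOpen {a : X} {E : Set X} (haE : a ∉ E) (hE : Closedish E) :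
    SeqOpen {x | Reach a E x} := by
  intro x p hconv hp
  obtain ⟨B, hB, hb⟩ := bounds_of_oconv hconv
  have hclean : ∃ m, ∀ v, p - B m ≤ v → v ≤ p + B m → v ∉ E := by
    by_contra hno
    push_neg at hno
    choose v hv1 hv2 hv3 using hno
    have hcv : SeqOrderConv v p := oconv_of_bounds hB (fun i => ⟨hv1 i, hv2 i⟩)
    exact reach_not_mem haE p hp (hE v p hv3 hcv)
  obtain ⟨m, hm⟩ := hclean
  refine Filter.eventually_atTop.2 ⟨m, fun j hj => ?_⟩
  have hj1 : p - B m ≤ x j := le_trans (sub_le_sub_left (hB.1 hj) p) (hb j).1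
  have hj2 : x j ≤ p + B m := (hb j).2.trans (add_le_add_right (hB.1 hj) p)
  exact Reach.step p (x j) B m hp hB hm hj1 hj2

lemma greedy {u c : ℕ → X}
    (hstep : ∀ j i : ℕ, ∃ j' i', j < j' ∧ i < i' ∧ u j' = c i') :
    ∃ (ψ χ : ℕ → ℕ), StrictMono ψ ∧ StrictMono χ ∧ ∀ t, u (ψ t) = c (χ t) := by
  classical
  let F : ℕ × ℕ → ℕ × ℕ := fun q =>
    ((hstep q.1 q.2).choose, (hstep q.1 q.2).choose_spec.choose)
  have hF : ∀ q : ℕ × ℕ, q.1 < (F q).1 ∧ q.2 < (F q).2 ∧ u (F q).1 = c (F q).2 :=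
    fun q => (hstep q.1 q.2).choose_spec.choose_spec
  let s : ℕ → ℕ × ℕ := fun t => Nat.rec (F (0, 0)) (fun _ ih => F ih) t
  have hs : ∀ t, s (t + 1) = F (s t) := fun t => rfl
  refine ⟨fun t => (s t).1, fun t => (s t).2,
    strictMono_nat_of_lt_succ (fun t => by rw [hs t]; exact (hF (s t)).1),
    strictMono_nat_of_lt_succ (fun t => by rw [hs t]; exact (hF (s t)).2.1),
    fun t => ?_⟩
  cases t with
  | zero => exact (hF (0, 0)).2.2
  | succ k =>
      show u (s (k+1)).1 = c (s (k+1)).2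
      rw [hs k]
      exact (hF (s k)).2.2

lemma freq_const_limit {u : ℕ → X} {p v : X} (h : SeqOrderConv u p)
    (hf : ∃ᶠ j in Filter.atTop, u j = v) : p = v := by
  obtain ⟨φ, hφ, hfe⟩ := extraction_of_frequently_atTop hf
  have h1 : SeqOrderConv (u ∘ φ) p := oconv_subseq h hφ
  have h2 : SeqOrderConv (u ∘ φ) v := by
    rw [show u ∘ φ = fun _ => v from funext hfe]
    exact oconv_const v
  exact oconv_unique h1 h2

/-- no-frequent-value implies finite fibers -/
lemma fiber_finite {u : ℕ → X} {v : X} (h : ¬ ∃ᶠ j in Filter.atTop, u j = v) :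
    {j : ℕ | u j = v}.Finite := by
  obtain ⟨N, hN⟩ := Filter.eventually_atTop.mp (Filter.not_frequently.mp h)
  refine Set.Finite.subset (Set.finite_Iio N) (fun j hj => ?_)
  by_contra hlt
  exact hN j (not_lt.mp hlt) hj

/-- assemble the step relation for the greedy extraction -/
lemma mk_hstep {u c : ℕ → X} {J₀ : ℕ}
    (hrange : ∀ j, J₀ ≤ j → u j ∈ Set.range c)
    (hfib : ∀ k, {j : ℕ | u j = c k}.Finite) :
    ∀ j i : ℕ, ∃ j' i', j < j' ∧ i < i' ∧ u j' = c i' := by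
  intro j i
  have hS : {j' : ℕ | ∃ k ≤ i, u j' = c k}.Finite := by
    have : {j' : ℕ | ∃ k ≤ i, u j' = c k} ⊆ ⋃ k ∈ Set.Iic i, {j' : ℕ | u j' = c k} := by
      rintro j' ⟨k, hk, he⟩
      exact Set.mem_biUnion hk he
    exact Set.Finite.subset (Set.Finite.biUnion (Set.finite_Iic i) (fun k _ => hfib k)) this
  obtain ⟨M, hM⟩ := hS.bddAbove
  set j' : ℕ := max (max (j + 1) J₀) (M + 1) with hj'
  have hj'1 : j < j' := lt_of_lt_of_le (Nat.lt_succ_self j)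
    (le_trans (le_max_left _ _) (le_max_left _ _))
  have hj'2 : J₀ ≤ j' := le_trans (le_max_right _ _) (le_max_left _ _)
  have hj'3 : j' ∉ {j' : ℕ | ∃ k ≤ i, u j' = c k} := by
    intro hmem
    have h1 : j' ≤ M := hM hmem
    have h2 : M + 1 ≤ j' := le_max_right _ _
    omega
  obtain ⟨k, hk⟩ := hrange j' hj'2
  refine ⟨j', k, hj'1, ?_, hk.symm⟩
  by_contra hik
  exact hj'3 ⟨k, not_lt.mp hik, hk.symm⟩

end Reach

section Char
variable {X : Type*} [AddCommGroup X] [PartialOrder X] [IsOrderedAddMonoid X]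

lemma closedish_of_conv {c : ℕ → X} {w : X} {E : Set X}
    (hE : E = Set.range c ∪ {w}) (hw : SeqOrderConv c w) : Closedish E := by
  classical
  intro u p hu hconv
  by_cases hfw : ∃ᶠ j in Filter.atTop, u j = w
  · have := freq_const_limit hconv hfw
    rw [hE, this]
    exact Or.inr rfl
  · have hevw := Filter.not_frequently.mp hfw
    by_cases hfv : ∃ k, ∃ᶠ j in Filter.atTop, u j = c k
    · obtain ⟨k, hk⟩ := hfv
      have := freq_const_limit hconv hk
      rw [hE, this]
      exact Or.inl ⟨k, rfl⟩
    · push_neg at hfv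
      have hfib : ∀ k, {j : ℕ | u j = c k}.Finite := fun k => fiber_finite (Filter.not_frequently.mpr (hfv k))
      obtain ⟨J₀, hJ₀⟩ := Filter.eventually_atTop.mp hevw
      have hrange : ∀ j, J₀ ≤ j → u j ∈ Set.range c := by
        intro j hj
        have := hu j
        rw [hE] at this
        rcases this with h | h
        · exact h
        · exact absurd h (hJ₀ j hj)
      obtain ⟨ψ, χ, hψ, hχ, heq⟩ := greedy (mk_hstep hrange hfib)
      have h1 : SeqOrderConv (u ∘ ψ) p := oconv_subseq hconv hψ
      have h2 : SeqOrderConv (c ∘ χ) w := oconv_subseq hw hχ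
      have h3 : u ∘ ψ = c ∘ χ := funext heq
      rw [h3] at h1
      have := oconv_unique h1 h2
      rw [hE, this]
      exact Or.inr rfl

lemma closedish_of_no_conv {c : ℕ → X} {E : Set X}
    (hE : E = Set.range c)
    (hno : ∀ (χ : ℕ → ℕ) (p : X), StrictMono χ → ¬ SeqOrderConv (c ∘ χ) p) :
    Closedish E := by
  classical
  intro u p hu hconv
  by_cases hfv : ∃ k, ∃ᶠ j in Filter.atTop, u j = c k
  · obtain ⟨k, hk⟩ := hfv
    have := freq_const_limit hconv hk
    rw [hE, this]
    exact ⟨k, rfl⟩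
  · push_neg at hfv
    have hfib : ∀ k, {j : ℕ | u j = c k}.Finite := fun k => fiber_finite (Filter.not_frequently.mpr (hfv k))
    have hrange : ∀ j, (0:ℕ) ≤ j → u j ∈ Set.range c := fun j _ => hE ▸ hu j
    obtain ⟨ψ, χ, hψ, hχ, heq⟩ := greedy (mk_hstep hrange hfib)
    have h1 : SeqOrderConv (u ∘ ψ) p := oconv_subseq hconv hψ
    have h3 : u ∘ ψ = c ∘ χ := funext heq
    rw [h3] at h1
    exact absurd h1 (hno χ p hχ)

/-- KEY: a sequence converging to `a` in the sequential order topology has a subsequence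
order converging to `a`. -/
lemma char_subseq {a : X} {b : ℕ → X}
    (hb : ∀ V : Set X, SeqOpen V → a ∈ V → ∀ᶠ k in Filter.atTop, b k ∈ V) :
    ∃ φ : ℕ → ℕ, StrictMono φ ∧ SeqOrderConv (b ∘ φ) a := by
  classical
  by_cases hfa : ∃ᶠ k in Filter.atTop, b k = a
  · obtain ⟨φ, hφ, he⟩ := extraction_of_frequently_atTop hfa
    exact ⟨φ, hφ, by rw [show b ∘ φ = fun _ => a from funext he]; exact oconv_const a⟩
  obtain ⟨K₀, hK₀⟩ := Filter.eventually_atTop.mp (Filter.not_frequently.mp hfa)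
  set b' : ℕ → X := fun k => b (k + K₀) with hb'def
  have hb'ne : ∀ k, b' k ≠ a := fun k => hK₀ (k + K₀) (Nat.le_add_left _ _)
  have hb' : ∀ V : Set X, SeqOpen V → a ∈ V → ∀ᶠ k in Filter.atTop, b' k ∈ V := by
    intro V hV haV
    obtain ⟨N, hN⟩ := Filter.eventually_atTop.mp (hb V hV haV)
    exact Filter.eventually_atTop.2 ⟨N, fun k hk => hN (k + K₀) (hk.trans (Nat.le_add_right _ _))⟩
  suffices hS : ∃ ψ : ℕ → ℕ, StrictMono ψ ∧ SeqOrderConv (b' ∘ ψ) a by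
    obtain ⟨ψ, hψ, hc⟩ := hS
    refine ⟨fun i => ψ i + K₀, fun i j hij => ?_, hc⟩
    simpa using Nat.add_lt_add_right (hψ hij) K₀
  by_contra hno0
  push_neg at hno0
  have hno : ∀ ψ : ℕ → ℕ, StrictMono ψ → ¬ SeqOrderConv (b' ∘ ψ) a := by
    intro ψ hψ hcv
    exact hno0 ψ hψ hcv
  by_cases h2 : ∃ (ψ : ℕ → ℕ) (w : X), StrictMono ψ ∧ SeqOrderConv (b' ∘ ψ) w
  · obtain ⟨ψ, w, hψ, hw⟩ := h2
    have hwa : w ≠ a := fun h => hno ψ hψ (h ▸ hw)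
    set c : ℕ → X := b' ∘ ψ with hcdef
    set E : Set X := Set.range c ∪ {w} with hEdef
    have haE : a ∉ E := by
      rintro (⟨i, hi⟩ | h)
      · exact hb'ne (ψ i) hi
      · exact hwa (Set.mem_singleton_iff.mp h).symm
    have hCl : Closedish E := closedish_of_conv hEdef hw
    have hV : SeqOpen {x | Reach a E x} := reach_seqOpen haE hCl
    obtain ⟨K, hK⟩ := Filter.eventually_atTop.mp (hb' _ hV Reach.base)
    have h3 : Reach a E (b' (ψ K)) := hK (ψ K) hψ.le_apply
    exact reach_not_mem haE _ h3 (Or.inl ⟨K, rfl⟩)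
  · push_neg at h2
    set E : Set X := Set.range b' with hEdef
    have haE : a ∉ E := by rintro ⟨i, hi⟩; exact hb'ne i hi
    have hCl : Closedish E :=
      closedish_of_no_conv hEdef (fun χ p hχ hcv => h2 χ p hχ hcv)
    have hV : SeqOpen {x | Reach a E x} := reach_seqOpen haE hCl
    obtain ⟨K, hK⟩ := Filter.eventually_atTop.mp (hb' _ hV Reach.base)
    exact reach_not_mem haE _ (hK K le_rfl) ⟨K, rfl⟩

end Char

section Top
variable {X : Type*} [AddCommGroup X] [PartialOrder X] [IsOrderedAddMonoid X]

def seqTop (X : Type*) [AddCommGroup X] [PartialOrder X] [IsOrderedAddMonoid X] : TopologicalSpace X where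
  IsOpen := SeqOpen
  isOpen_univ := fun x p _ _ => Filter.Eventually.of_forall (fun _ => trivial)
  isOpen_inter := fun U V hU hV x p hx hp =>
    ((hU x p hx hp.1).and (hV x p hx hp.2)).mono (fun j h => h)
  isOpen_sUnion := fun S hS x p hx hp => by
    obtain ⟨U, hU, hpU⟩ := hp
    exact (hS U hU x p hx hpU).mono (fun j h => ⟨U, hU, h⟩)

lemma seqTop_mem :
    seqTop X ∈ {t : TopologicalSpace X | ∀ (x : ℕ → X) (l : X), SeqOrderConv x l →
      Filter.Tendsto x Filter.atTop (@nhds X t l)} := by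
  intro x l hconv
  rw [@tendsto_nhds X (seqTop X) ℕ l x Filter.atTop]
  intro s hs hls
  exact hs x l hconv hls

lemma tendsto_seqOrderTop_iff {x : ℕ → X} {p : X} :
    Filter.Tendsto x Filter.atTop (@nhds X (seqOrderTop X) p) ↔
      ∀ V : Set X, SeqOpen V → p ∈ V → ∀ᶠ n in Filter.atTop, x n ∈ V := by
  constructor
  · intro h V hV hpV
    have h1 : seqOrderTop X ≤ seqTop X := sInf_le seqTop_mem
    have h2 : @nhds X (seqOrderTop X) p ≤ @nhds X (seqTop X) p := nhds_mono h1
    have h3 := h.mono_right h2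
    have h4 : V ∈ @nhds X (seqTop X) p := @IsOpen.mem_nhds X (seqTop X) p V hV hpV
    exact h3 h4
  · intro h
    show Filter.Tendsto x Filter.atTop
      (@nhds X (sInf {t : TopologicalSpace X | ∀ (x : ℕ → X) (l : X), SeqOrderConv x l →
        Filter.Tendsto x Filter.atTop (@nhds X t l)}) p)
    rw [nhds_sInf]
    rw [Filter.tendsto_iInf]
    intro t
    rw [Filter.tendsto_iInf]
    intro ht
    rw [@tendsto_nhds X t ℕ p x Filter.atTop]
    intro U hU hpU
    have hUseq : SeqOpen U := by
      intro y q hy hq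
      have := ht y q hy
      exact this (@IsOpen.mem_nhds X t q U hU hq)
    exact h U hUseq hpU

end Top

/-- In an ordered vector space, if `(1/n)·a` order converges to `0`, then scalar multiplication
is compatible with convergence in the sequential order topology. -/
theorem stmt3 {X : Type*} [AddCommGroup X] [PartialOrder X] [IsOrderedAddMonoid X] [Module ℝ X]
    [PosSMulStrictMono ℝ X] [PosSMulReflectLT ℝ X]
    (a : X) (aN : ℕ → X) (lam : ℕ → ℝ) (l : ℝ)
    (ha : Filter.Tendsto aN Filter.atTop (@nhds X (seqOrderTop X) a))
    (hlam : Filter.Tendsto lam Filter.atTop (nhds l))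
    (hsmall : SeqOrderConv (fun n : ℕ => ((n : ℝ) + 1)⁻¹ • a) 0) :
    Filter.Tendsto (fun n => lam n • aN n) Filter.atTop (@nhds X (seqOrderTop X) (l • a)) := by

  classical
  have hae : ∀ V : Set X, SeqOpen V → a ∈ V → ∀ᶠ n in Filter.atTop, aN n ∈ V :=
    tendsto_seqOrderTop_iff.mp ha
  rw [tendsto_seqOrderTop_iff]
  intro U hUseq hlU
  by_contra hev
  have hfreq : ∃ᶠ n in Filter.atTop, lam n • aN n ∉ U := Filter.not_eventually.mp hev
  obtain ⟨φ, hφ, hbad⟩ := extraction_of_frequently_atTop hfreq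
  have hbφ : ∀ V : Set X, SeqOpen V → a ∈ V → ∀ᶠ k in Filter.atTop, (aN ∘ φ) k ∈ V := by
    intro V hV haV
    obtain ⟨N, hN⟩ := Filter.eventually_atTop.mp (hae V hV haV)
    exact Filter.eventually_atTop.2 ⟨N, fun k hk => hN (φ k) (hk.trans hφ.le_apply)⟩
  obtain ⟨ψ, hψ, hconv⟩ := char_subseq hbφ
  obtain ⟨D, hD, hDb⟩ := bounds_of_oconv hconv
  obtain ⟨c, mf, hc1, hcb, hmf_mono, hmf_unb, hmfb⟩ := scalar_control hlam
  have hclt : (0:ℝ) < c := lt_of_lt_of_le one_pos hc1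
  obtain ⟨A, hA, hAb⟩ := bounds_of_oconv hsmall
  set θ : ℕ → ℕ := fun i => φ (ψ i) with hθdef
  have hθs : StrictMono θ := hφ.comp hψ
  set F : ℕ → X := fun i => c • (D i + D i) + c • (A (mf (θ i)) + A (mf (θ i))) with hFdef
  have hFA : ANull F := by
    refine ANull.add ((hD.add hD).smul hclt) ?_
    have h1 : ANull (fun m => c • (A m + A m)) := (hA.add hA).smul hclt
    exact h1.comp (hmf_mono.comp hθs.monotone) (fun M => by
      obtain ⟨N, hN⟩ := hmf_unb M
      exact ⟨N, hN (θ N) hθs.le_apply⟩)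
  have hbound : ∀ i, (l • a) - F i ≤ lam (θ i) • aN (θ i) ∧
      lam (θ i) • aN (θ i) ≤ (l • a) + F i := by
    intro i
    have hdec : lam (θ i) • aN (θ i) =
        l • a + (lam (θ i) • (aN (θ i) - a) + (lam (θ i) - l) • a) := by
      rw [smul_sub, sub_smul]; abel
    -- term 1
    have hD1 : -(D i) ≤ aN (θ i) - a := by
      have h := (hDb i).1
      have h2 := sub_le_sub_right h a
      rwa [sub_sub_cancel_left] at h2
    have hD2 : aN (θ i) - a ≤ D i := by
      have h := (hDb i).2
      exact sub_le_iff_le_add'.2 h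
    have ht1 := smul_in (s := lam (θ i)) (c := c) (u := aN (θ i) - a)
      (P := -(D i)) (Q := D i) (hcb (θ i)) hD1 hD2
      (neg_nonpos.2 (hD.2.1 i)) (hD.2.1 i)
    rw [sub_neg_eq_add] at ht1
    -- term 2
    set m : ℕ := mf (θ i) with hmdef
    set s : ℝ := lam (θ i) - l with hsdef
    have hmp : (0:ℝ) < (m:ℝ) + 1 := by positivity
    have hsa : s • a = (s * ((m:ℝ) + 1)) • (((m:ℝ) + 1)⁻¹ • a) := by
      rw [smul_smul]
      congr 1
      field_simp
    have habs : |s * ((m:ℝ) + 1)| ≤ c := by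
      rw [abs_mul, abs_of_pos hmp]
      exact hmfb (θ i)
    have hu1 : -(A m) ≤ ((m:ℝ) + 1)⁻¹ • a := by
      have h := (hAb m).1
      rwa [zero_sub] at h
    have hu2 : ((m:ℝ) + 1)⁻¹ • a ≤ A m := by
      have h := (hAb m).2
      rwa [zero_add] at h
    have ht2 := smul_in (s := s * ((m:ℝ) + 1)) (c := c) (u := ((m:ℝ) + 1)⁻¹ • a)
      (P := -(A m)) (Q := A m) habs hu1 hu2
      (neg_nonpos.2 (hA.2.1 m)) (hA.2.1 m)
    rw [sub_neg_eq_add, ← hsa] at ht2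
    constructor
    · rw [hdec]
      have hsum := add_le_add ht1.1 ht2.1
      rw [← neg_add] at hsum
      calc (l • a) - F i = l • a + (-(c • (D i + D i) + c • (A m + A m))) := by
            rw [hFdef]; simp only [← hmdef]; abel
        _ ≤ l • a + (lam (θ i) • (aN (θ i) - a) + s • a) := add_le_add_right hsum _
    · rw [hdec]
      have hsum := add_le_add ht1.2 ht2.2
      calc l • a + (lam (θ i) • (aN (θ i) - a) + s • a)
          ≤ l • a + (c • (D i + D i) + c • (A m + A m)) := add_le_add_right hsum _
        _ = (l • a) + F i := by rw [hFdef]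
  have hoconv : SeqOrderConv (fun i => lam (θ i) • aN (θ i)) (l • a) :=
    oconv_of_bounds hFA hbound
  obtain ⟨i, hi⟩ := (hUseq _ _ hoconv hlU).exists
  exact hbad (ψ i) hi
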